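/- Suppose $a_2 = a_1 - a_1^2$ and the hypotheses of the generalized Dehn-filling setup hold ($m(0)=l(0)=-1$, $l = -1 + a_1(m+1) + \frac{a_2}{2}(m+1)^2 + \frac{a_3}{6}(m+1)^3 + O((m+1)^4)$, $p\log(-m)+q\log(-l) = i\theta/2$, $a_1$ non-real). Then the Taylor expansion of $m$ in $\theta$ is $m(\theta) = -1 - \frac{i}{2(p+a_1 q)}\theta + \frac{1}{8(p+a_1 q)^2}\theta^2 + i\frac{p + (3a_1 - 3a_1^2 + a_1^3 - a_3)q}{48(p+a_1 q)^4}\theta^3 + O(\theta^4)$. -/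

import Mathlib

open Filter Asymptotics Topology

/-- Powers compare near zero. -/
lemma pow_bigO_pow {j k : ℕ} (h : k ≤ j) :
    (fun θ : ℂ => θ ^ j) =O[nhds 0] fun θ => θ ^ k := by
  refine IsBigO.of_bound 1 ?_
  filter_upwards [Metric.closedBall_mem_nhds (0:ℂ) one_pos] with θ hθ
  have hθ1 : ‖θ‖ ≤ 1 := by simpa using hθ
  simp only [norm_pow, one_mul]
  exact pow_le_pow_of_le_one (norm_nonneg _) hθ1 h

/-- One extraction step. -/
lemma lead_coeff_zero {g : ℂ → ℂ} {c : ℂ} {k : ℕ} (hk : k ≤ 3)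
    (hg : Tendsto g (nhds 0) (nhds c))
    (h : (fun θ : ℂ => θ ^ k * g θ) =O[nhds 0] fun θ => θ ^ 4) : c = 0 := by
  have h1 : g =O[nhdsWithin (0:ℂ) {0}ᶜ] fun θ => θ ^ (4 - k) := by
    have h' := (h.mono nhdsWithin_le_nhds).mul
      (isBigO_refl (fun θ : ℂ => θ⁻¹ ^ k) (nhdsWithin (0:ℂ) {0}ᶜ))
    refine h'.congr' ?_ ?_
    · filter_upwards [self_mem_nhdsWithin] with θ (hθ : θ ≠ 0)
      rw [mul_right_comm, ← mul_pow, mul_inv_cancel₀ hθ, one_pow, one_mul]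
    · filter_upwards [self_mem_nhdsWithin] with θ (hθ : θ ≠ 0)
      rw [inv_pow, mul_inv_eq_iff_eq_mul₀ (pow_ne_zero _ hθ), ← pow_add]
      congr 1
      omega
  have h2 : Tendsto (fun θ : ℂ => θ ^ (4 - k)) (nhdsWithin (0:ℂ) {0}ᶜ) (nhds 0) := by
    have := ((continuous_pow (4 - k)).tendsto (0:ℂ)).mono_left
      (nhdsWithin_le_nhds (s := {(0:ℂ)}ᶜ))
    simpa [zero_pow (by omega : 4 - k ≠ 0)] using this
  exact tendsto_nhds_unique (hg.mono_left nhdsWithin_le_nhds) (h1.trans_tendsto h2)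

/-- Coefficients of a cubic that is O(θ⁴) all vanish. -/
lemma cubic_coeffs_zero {A1 A2 A3 : ℂ}
    (h : (fun θ : ℂ => A1 * θ + A2 * θ ^ 2 + A3 * θ ^ 3) =O[nhds 0] fun θ => θ ^ 4) :
    A1 = 0 ∧ A2 = 0 ∧ A3 = 0 := by
  have t1 : Tendsto (fun θ : ℂ => A1 + A2 * θ + A3 * θ ^ 2) (nhds 0) (nhds A1) := by
    have : Continuous (fun θ : ℂ => A1 + A2 * θ + A3 * θ ^ 2) := by continuity
    simpa using this.tendsto 0
  have hA1 : A1 = 0 := lead_coeff_zero (k := 1) (by norm_num)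
    t1 (h.congr (fun θ => by ring) fun θ => rfl)
  subst hA1
  have t2 : Tendsto (fun θ : ℂ => A2 + A3 * θ) (nhds 0) (nhds A2) := by
    have : Continuous (fun θ : ℂ => A2 + A3 * θ) := by continuity
    simpa using this.tendsto 0
  have hA2 : A2 = 0 := lead_coeff_zero (k := 2) (by norm_num)
    t2 (h.congr (fun θ => by ring) fun θ => rfl)
  subst hA2
  have t3 : Tendsto (fun _ : ℂ => A3) (nhds 0) (nhds A3) := tendsto_const_nhds
  have hA3 : A3 = 0 := lead_coeff_zero (k := 3) (by norm_num)
    t3 (h.congr (fun θ => by ring) fun θ => rfl)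
  exact ⟨rfl, rfl, hA3⟩

/-- Taylor expansion of log(1+z) to third order. -/
lemma log_bigO :
    (fun z : ℂ => Complex.log (1 + z) - (z - z ^ 2 / 2 + z ^ 3 / 3)) =O[nhds 0]
      fun z => z ^ 4 := by
  refine IsBigO.of_bound 1 ?_
  filter_upwards [Metric.closedBall_mem_nhds (0:ℂ) (by norm_num : (0:ℝ) < 1/2)] with z hz
  have hz' : ‖z‖ ≤ 1/2 := by simpa using hz
  have h1 : ‖z‖ < 1 := lt_of_le_of_lt hz' (by norm_num)
  have hb := Complex.norm_log_sub_logTaylor_le 3 h1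
  have hlt : Complex.logTaylor 4 z = z - z ^ 2 / 2 + z ^ 3 / 3 := by
    simp [Complex.logTaylor, Finset.sum_range_succ]
    ring
  rw [hlt] at hb
  have h2 : (1 - ‖z‖)⁻¹ ≤ 2 := by
    rw [inv_le_comm₀ (by linarith) (by norm_num)]
    linarith
  calc ‖Complex.log (1 + z) - (z - z ^ 2 / 2 + z ^ 3 / 3)‖
      ≤ ‖z‖ ^ 4 * (1 - ‖z‖)⁻¹ / (3 + 1) := hb
    _ ≤ ‖z‖ ^ 4 * 2 / 4 := by gcongr; norm_num
    _ ≤ 1 * ‖z ^ 4‖ := by rw [norm_pow]; nlinarith [pow_nonneg (norm_nonneg z) 4]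

set_option maxHeartbeats 1000000 in
/-- When `a₂ = a₁ - a₁²`, the Taylor expansion of `m` in `θ` is
`m(θ) = -1 - i/(2(p+a₁q)) θ + 1/(8(p+a₁q)²) θ² + i(p + (3a₁-3a₁²+a₁³-a₃)q)/(48(p+a₁q)⁴) θ³ + O(θ⁴)`. -/
theorem taylor_expansion_m (a1 a2 a3 : ℂ) (ha1 : a1.im ≠ 0) (ha2 : a2 = a1 - a1 ^ 2)
    (p q : ℝ) (hpq : (p, q) ≠ (0, 0))
    (m l : ℂ → ℂ) (hm : AnalyticAt ℂ m 0) (hl : AnalyticAt ℂ l 0)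
    (hm0 : m 0 = -1) (hl0 : l 0 = -1)
    (hrel : (fun θ : ℂ => l θ - (-1 + a1 * (m θ + 1) + a2 / 2 * (m θ + 1) ^ 2 +
        a3 / 6 * (m θ + 1) ^ 3)) =O[nhds 0] fun θ : ℂ => (m θ + 1) ^ 4)
    (hdehn : ∀ᶠ θ : ℂ in nhds 0,
      (p : ℂ) * Complex.log (-(m θ)) + (q : ℂ) * Complex.log (-(l θ)) =
        Complex.I * θ / 2) :
    (fun θ : ℂ => m θ -
        (-1 - Complex.I / (2 * ((p : ℂ) + a1 * q)) * θ +
          1 / (8 * ((p : ℂ) + a1 * q) ^ 2) * θ ^ 2 +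
          Complex.I * ((p : ℂ) + (3 * a1 - 3 * a1 ^ 2 + a1 ^ 3 - a3) * q) /
            (48 * ((p : ℂ) + a1 * q) ^ 4) * θ ^ 3))
      =O[nhds 0] fun θ : ℂ => θ ^ 4 := by
  subst ha2
  set s : ℂ := (p : ℂ) + a1 * q with hs_def
  have hs : s ≠ 0 := by
    rcases eq_or_ne q 0 with hq | hq
    · have hp : p ≠ 0 := by
        intro hp; exact hpq (by simp [hp, hq])
      rw [hs_def, hq]
      push_cast
      simpa using fun h => hp (by exact_mod_cast h)
    · intro h
      have him := congrArg Complex.im h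
      simp [hs_def, Complex.add_im, Complex.mul_im] at him
      rcases him with h1 | h2
      · exact ha1 h1
      · exact hq h2
  obtain ⟨pm, hpm⟩ := hm
  have hmc : Tendsto m (nhds 0) (nhds (-1)) := by
    simpa [hm0] using hpm.continuousAt.tendsto
  have hlc : Tendsto l (nhds 0) (nhds (-1)) := by
    simpa [hl0] using hl.continuousAt.tendsto
  set c1 := pm.coeff 1 with hc1def
  set c2 := pm.coeff 2 with hc2def
  set c3 := pm.coeff 3 with hc3def
  have hc0 : pm.coeff 0 = -1 := by
    have h := hpm.coeff_zero 1
    rw [hm0] at h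
    exact h
  -- Taylor expansion of m to third order
  have hT : (fun θ : ℂ => (m θ + 1) - (c1 * θ + c2 * θ ^ 2 + c3 * θ ^ 3))
      =O[nhds 0] fun θ : ℂ => θ ^ 4 := by
    have h := hpm.isBigO_sub_partialSum_pow 4
    simp only [zero_add] at h
    rw [show (fun y : ℂ => ‖y‖ ^ 4) = fun y : ℂ => ‖y ^ 4‖ from funext fun y => (norm_pow y 4).symm] at h
    have h2 := isBigO_norm_right.1 h
    refine h2.congr (fun y => ?_) (fun y => rfl)
    have hps : pm.partialSum 4 y = pm.coeff 0 + c1 * y + c2 * y ^ 2 + c3 * y ^ 3 := by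
      simp [FormalMultilinearSeries.partialSum, Finset.sum_range_succ,
        FormalMultilinearSeries.apply_eq_pow_smul_coeff, smul_eq_mul]
      ring
    rw [hps, hc0]; ring
  -- basic tendsto facts
  have hfT : Tendsto (fun θ : ℂ => m θ + 1) (nhds 0) (nhds 0) := by
    simpa using hmc.add (tendsto_const_nhds (x := (1:ℂ)))
  have hgT : Tendsto (fun θ : ℂ => l θ + 1) (nhds 0) (nhds 0) := by
    simpa using hlc.add (tendsto_const_nhds (x := (1:ℂ)))
  have polyT : ∀ b1 b2 b3 : ℂ, Tendsto (fun θ : ℂ => b1 * θ + b2 * θ ^ 2 + b3 * θ ^ 3)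
      (nhds 0) (nhds 0) := by
    intro b1 b2 b3
    have hcont : Continuous fun θ : ℂ => b1 * θ + b2 * θ ^ 2 + b3 * θ ^ 3 := by fun_prop
    simpa using hcont.tendsto 0
  have hpolyO : ∀ b1 b2 b3 : ℂ, (fun θ : ℂ => b1 * θ + b2 * θ ^ 2 + b3 * θ ^ 3)
      =O[nhds 0] fun θ : ℂ => θ := by
    intro b1 b2 b3
    have hcont : Continuous fun θ : ℂ => b1 + b2 * θ + b3 * θ ^ 2 := by fun_prop
    have h1 := (isBigO_refl (fun θ : ℂ => θ) (nhds 0)).mul ((hcont.tendsto 0).isBigO_one ℂ)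
    exact h1.congr (fun θ => by ring) (fun θ => by ring)
  have hθ41 : (fun θ : ℂ => θ ^ 4) =O[nhds 0] fun θ : ℂ => θ :=
    (pow_bigO_pow (by norm_num)).congr (fun θ => rfl) fun θ => pow_one θ
  have hfO : (fun θ : ℂ => m θ + 1) =O[nhds 0] fun θ : ℂ => θ := by
    have h := (hT.trans hθ41).add (hpolyO c1 c2 c3)
    exact h.congr (fun θ => by ring) fun θ => rfl
  have hfO4 : (fun θ : ℂ => (m θ + 1) ^ 4) =O[nhds 0] fun θ : ℂ => θ ^ 4 := hfO.pow 4
  -- generic: θ^4 times a polynomial is O(θ^4)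
  have hW : ∀ w0 w1 w2 w3 w4 w5 : ℂ,
      (fun θ : ℂ => θ ^ 4 * (w0 + w1 * θ + w2 * θ ^ 2 + w3 * θ ^ 3 + w4 * θ ^ 4 + w5 * θ ^ 5))
        =O[nhds 0] fun θ : ℂ => θ ^ 4 := by
    intro w0 w1 w2 w3 w4 w5
    have hcont : Continuous fun θ : ℂ => w0 + w1 * θ + w2 * θ ^ 2 + w3 * θ ^ 3 + w4 * θ ^ 4 + w5 * θ ^ 5 := by
      fun_prop
    have h := (isBigO_refl (fun θ : ℂ => θ ^ 4) (nhds 0)).mul ((hcont.tendsto 0).isBigO_one ℂ)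
    exact h.congr (fun θ => rfl) fun θ => by ring
  -- truncation of (m+1)^2
  have hT2 : (fun θ : ℂ => (m θ + 1) ^ 2 - (c1 ^ 2 * θ ^ 2 + 2 * c1 * c2 * θ ^ 3))
      =O[nhds 0] fun θ : ℂ => θ ^ 4 := by
    have hsum : Tendsto (fun θ : ℂ => (m θ + 1) + (c1 * θ + c2 * θ ^ 2 + c3 * θ ^ 3))
        (nhds 0) (nhds 0) := by simpa using hfT.add (polyT c1 c2 c3)
    have h1 := (hT.mul (hsum.isBigO_one ℂ)).congr (fun θ => rfl) fun θ => mul_one _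
    have h2 := hW (c2 ^ 2 + 2 * c1 * c3) (2 * c2 * c3) (c3 ^ 2) 0 0 0
    exact (h1.add h2).congr (fun θ => by ring) fun θ => rfl
  -- truncation of (m+1)^3
  have hT3 : (fun θ : ℂ => (m θ + 1) ^ 3 - c1 ^ 3 * θ ^ 3)
      =O[nhds 0] fun θ : ℂ => θ ^ 4 := by
    have hsum : Tendsto (fun θ : ℂ => (m θ + 1) ^ 2 +
        ((m θ + 1) * (c1 * θ + c2 * θ ^ 2 + c3 * θ ^ 3)
          + (c1 * θ + c2 * θ ^ 2 + c3 * θ ^ 3) ^ 2)) (nhds 0) (nhds 0) := by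
      simpa using (hfT.pow 2).add ((hfT.mul (polyT c1 c2 c3)).add ((polyT c1 c2 c3).pow 2))
    have h1 := (hT.mul (hsum.isBigO_one ℂ)).congr (fun θ => rfl) fun θ => mul_one _
    have h2 := hW (3 * c1 ^ 2 * c2) (3 * c1 ^ 2 * c3 + 3 * c1 * c2 ^ 2)
      (c2 ^ 3 + 6 * c1 * c2 * c3) (3 * c2 ^ 2 * c3 + 3 * c1 * c3 ^ 2) (3 * c2 * c3 ^ 2) (c3 ^ 3)
    exact (h1.add h2).congr (fun θ => by ring) fun θ => rfl
  -- Taylor expansion of l + 1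
  have hU : (fun θ : ℂ => (l θ + 1) - (a1 * c1 * θ + (a1 * c2 + (a1 - a1 ^ 2) / 2 * c1 ^ 2) * θ ^ 2
      + (a1 * c3 + (a1 - a1 ^ 2) * c1 * c2 + a3 / 6 * c1 ^ 3) * θ ^ 3))
      =O[nhds 0] fun θ : ℂ => θ ^ 4 := by
    have h0 := hrel.trans hfO4
    have h := ((h0.add (hT.const_mul_left a1)).add
      (hT2.const_mul_left ((a1 - a1 ^ 2) / 2))).add (hT3.const_mul_left (a3 / 6))
    exact h.congr (fun θ => by ring) fun θ => rfl
  set d1 : ℂ := a1 * c1 with hd1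
  set d2 : ℂ := a1 * c2 + (a1 - a1 ^ 2) / 2 * c1 ^ 2 with hd2
  set d3 : ℂ := a1 * c3 + (a1 - a1 ^ 2) * c1 * c2 + a3 / 6 * c1 ^ 3 with hd3
  have hgO : (fun θ : ℂ => l θ + 1) =O[nhds 0] fun θ : ℂ => θ := by
    have h := (hU.trans hθ41).add (hpolyO d1 d2 d3)
    exact h.congr (fun θ => by ring) fun θ => rfl
  have hgO4 : (fun θ : ℂ => (l θ + 1) ^ 4) =O[nhds 0] fun θ : ℂ => θ ^ 4 := hgO.pow 4
  -- truncation of (l+1)^2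
  have hU2 : (fun θ : ℂ => (l θ + 1) ^ 2 - (d1 ^ 2 * θ ^ 2 + 2 * d1 * d2 * θ ^ 3))
      =O[nhds 0] fun θ : ℂ => θ ^ 4 := by
    have hsum : Tendsto (fun θ : ℂ => (l θ + 1) + (d1 * θ + d2 * θ ^ 2 + d3 * θ ^ 3))
        (nhds 0) (nhds 0) := by simpa using hgT.add (polyT d1 d2 d3)
    have h1 := (hU.mul (hsum.isBigO_one ℂ)).congr (fun θ => rfl) fun θ => mul_one _
    have h2 := hW (d2 ^ 2 + 2 * d1 * d3) (2 * d2 * d3) (d3 ^ 2) 0 0 0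
    exact (h1.add h2).congr (fun θ => by ring) fun θ => rfl
  -- truncation of (l+1)^3
  have hU3 : (fun θ : ℂ => (l θ + 1) ^ 3 - d1 ^ 3 * θ ^ 3)
      =O[nhds 0] fun θ : ℂ => θ ^ 4 := by
    have hsum : Tendsto (fun θ : ℂ => (l θ + 1) ^ 2 +
        ((l θ + 1) * (d1 * θ + d2 * θ ^ 2 + d3 * θ ^ 3)
          + (d1 * θ + d2 * θ ^ 2 + d3 * θ ^ 3) ^ 2)) (nhds 0) (nhds 0) := by
      simpa using (hgT.pow 2).add ((hgT.mul (polyT d1 d2 d3)).add ((polyT d1 d2 d3).pow 2))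
    have h1 := (hU.mul (hsum.isBigO_one ℂ)).congr (fun θ => rfl) fun θ => mul_one _
    have h2 := hW (3 * d1 ^ 2 * d2) (3 * d1 ^ 2 * d3 + 3 * d1 * d2 ^ 2)
      (d2 ^ 3 + 6 * d1 * d2 * d3) (3 * d2 ^ 2 * d3 + 3 * d1 * d3 ^ 2) (3 * d2 * d3 ^ 2) (d3 ^ 3)
    exact (h1.add h2).congr (fun θ => by ring) fun θ => rfl
  -- log expansions
  have hlogm : (fun θ : ℂ => Complex.log (-(m θ)) +
      ((m θ + 1) + (m θ + 1) ^ 2 / 2 + (m θ + 1) ^ 3 / 3)) =O[nhds 0] fun θ : ℂ => θ ^ 4 := by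
    have hneg : Tendsto (fun θ : ℂ => -(m θ + 1)) (nhds 0) (nhds 0) := by
      simpa using hfT.neg
    have h1 : (fun θ : ℂ => Complex.log (1 + -(m θ + 1)) -
        (-(m θ + 1) - (-(m θ + 1)) ^ 2 / 2 + (-(m θ + 1)) ^ 3 / 3))
        =O[nhds 0] (fun θ : ℂ => (-(m θ + 1)) ^ 4) := log_bigO.comp_tendsto hneg
    have h2 : (fun θ : ℂ => (-(m θ + 1)) ^ 4) =O[nhds 0] fun θ : ℂ => θ ^ 4 :=
      hfO4.congr (fun θ => by ring) fun θ => rfl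
    refine (h1.trans h2).congr (fun θ => ?_) fun θ => rfl
    rw [show (1 + -(m θ + 1)) = -(m θ) by ring]
    ring
  have hlogl : (fun θ : ℂ => Complex.log (-(l θ)) +
      ((l θ + 1) + (l θ + 1) ^ 2 / 2 + (l θ + 1) ^ 3 / 3)) =O[nhds 0] fun θ : ℂ => θ ^ 4 := by
    have hneg : Tendsto (fun θ : ℂ => -(l θ + 1)) (nhds 0) (nhds 0) := by
      simpa using hgT.neg
    have h1 : (fun θ : ℂ => Complex.log (1 + -(l θ + 1)) -
        (-(l θ + 1) - (-(l θ + 1)) ^ 2 / 2 + (-(l θ + 1)) ^ 3 / 3))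
        =O[nhds 0] (fun θ : ℂ => (-(l θ + 1)) ^ 4) := log_bigO.comp_tendsto hneg
    have h2 : (fun θ : ℂ => (-(l θ + 1)) ^ 4) =O[nhds 0] fun θ : ℂ => θ ^ 4 :=
      hgO4.congr (fun θ => by ring) fun θ => rfl
    refine (h1.trans h2).congr (fun θ => ?_) fun θ => rfl
    rw [show (1 + -(l θ + 1)) = -(l θ) by ring]
    ring
  -- replace by truncations
  have hlogmT : (fun θ : ℂ => Complex.log (-(m θ)) +
      (c1 * θ + (c2 + c1 ^ 2 / 2) * θ ^ 2 + (c3 + c1 * c2 + c1 ^ 3 / 3) * θ ^ 3))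
      =O[nhds 0] fun θ : ℂ => θ ^ 4 := by
    have h := ((hlogm.sub hT).sub (hT2.const_mul_left (1/2))).sub (hT3.const_mul_left (1/3))
    exact h.congr (fun θ => by ring) fun θ => rfl
  have hloglT : (fun θ : ℂ => Complex.log (-(l θ)) +
      (d1 * θ + (d2 + d1 ^ 2 / 2) * θ ^ 2 + (d3 + d1 * d2 + d1 ^ 3 / 3) * θ ^ 3))
      =O[nhds 0] fun θ : ℂ => θ ^ 4 := by
    have h := ((hlogl.sub hU).sub (hU2.const_mul_left (1/2))).sub (hU3.const_mul_left (1/3))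
    exact h.congr (fun θ => by ring) fun θ => rfl
  -- combine using the Dehn filling equation
  have hE : (fun θ : ℂ => (Complex.I / 2 + (p : ℂ) * c1 + (q : ℂ) * d1) * θ +
      ((p : ℂ) * (c2 + c1 ^ 2 / 2) + (q : ℂ) * (d2 + d1 ^ 2 / 2)) * θ ^ 2 +
      ((p : ℂ) * (c3 + c1 * c2 + c1 ^ 3 / 3) + (q : ℂ) * (d3 + d1 * d2 + d1 ^ 3 / 3)) * θ ^ 3)
      =O[nhds 0] fun θ : ℂ => θ ^ 4 := by
    have hsum := (hlogmT.const_mul_left (p : ℂ)).add (hloglT.const_mul_left (q : ℂ))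
    refine hsum.congr' ?_ (Filter.EventuallyEq.refl _ _)
    filter_upwards [hdehn] with θ hθ
    linear_combination hθ
  obtain ⟨hA1, hA2, hA3⟩ := cubic_coeffs_zero hE
  simp only [hd1, hd2, hd3] at hA1 hA2 hA3
  -- solve for the coefficients
  have hc1e : c1 * (2 * ((p : ℂ) + a1 * q)) = -Complex.I := by
    linear_combination (2 : ℂ) * hA1
  have hc2e : c2 * (8 * ((p : ℂ) + a1 * q) ^ 2) = 1 := by
    linear_combination (8 * ((p : ℂ) + a1 * q)) * hA2 +
      (-(2 * ((p : ℂ) + a1 * q) * c1 - Complex.I)) * hc1e + (-1 : ℂ) * Complex.I_sq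
  have hc3e : c3 * (48 * ((p : ℂ) + a1 * q) ^ 4) =
      Complex.I * ((p : ℂ) + (3 * a1 - 3 * a1 ^ 2 + a1 ^ 3 - a3) * q) := by
    linear_combination (48 * ((p : ℂ) + a1 * q) ^ 3) * hA3 +
      (-6 * ((p : ℂ) + a1 * q) ^ 2 * c1) * hc2e +
      (-(3 * ((p : ℂ) + a1 * q)) - 6 * ((p : ℂ) / 3 + (q : ℂ) * (a3 + 3 * a1 ^ 2 - a1 ^ 3) / 6) *
        (4 * ((p : ℂ) + a1 * q) ^ 2 * c1 ^ 2 - 2 * Complex.I * ((p : ℂ) + a1 * q) * c1 - 1)) * hc1e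
      + (2 * c1 * (-2 * (p:ℂ) * a1 * q - 3 * (p:ℂ) * a1 ^ 2 * q + (p:ℂ) * a1 ^ 3 * q
        - (p:ℂ) * q * a3 - 2 * (p:ℂ) ^ 2 - a1 * (q:ℂ) ^ 2 * a3 - 3 * a1 ^ 3 * (q:ℂ) ^ 2
        + a1 ^ 4 * (q:ℂ) ^ 2)) * Complex.I_sq
  have hc1 : c1 = -Complex.I / (2 * s) := by
    rw [eq_div_iff (mul_ne_zero two_ne_zero hs), hs_def]
    exact hc1e
  have hc2 : c2 = 1 / (8 * s ^ 2) := by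
    rw [eq_div_iff (mul_ne_zero (by norm_num) (pow_ne_zero 2 hs)), hs_def]
    exact hc2e
  have hc3 : c3 = Complex.I * ((p : ℂ) + (3 * a1 - 3 * a1 ^ 2 + a1 ^ 3 - a3) * q) /
      (48 * s ^ 4) := by
    rw [eq_div_iff (mul_ne_zero (by norm_num) (pow_ne_zero 4 hs)), hs_def]
    exact hc3e
  refine hT.congr (fun θ => ?_) fun θ => rfl
  rw [hc1, hc2, hc3]
  ring
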